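/- Let R be a local commutative noetherian ring and I an ideal with dim R/I = dim R. Then every balanced big Cohen–Macaulay R/I-module is a balanced big Cohen–Macaulay R-module, when regarded as an R-module via restriction of scalars. -/

import Mathlib

/-- Let `R` be a commutative noetherian local ring and `I` an ideal with
`dim R/I = dim R`. Then every balanced big Cohen–Macaulay `R/I`-module `B` is a balanced big
Cohen–Macaulay `R`-module (via restriction of scalars): `m_R B ≠ B` and every system of
parameters of `R` (a sequence of `dim R` elements generating an `m_R`-primary ideal) is a
`B`-regular sequence.  Here a balanced big Cohen–Macaulay `R/I`-module means
`m_{R/I} B ≠ B` and every system of parameters of `R/I` is a `B`-regular sequence, with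
`m_{R/I}` the image of `m_R` in `R/I`. -/
theorem balancedBigCohenMacaulay_of_quotient
    (R : Type*) [CommRing R] [IsNoetherianRing R] [IsLocalRing R]
    (I : Ideal R) (hdim : ringKrullDim (R ⧸ I) = ringKrullDim R)
    (B : Type*) [AddCommGroup B] [Module (R ⧸ I) B]
    (hB1 : ((IsLocalRing.maximalIdeal R).map (Ideal.Quotient.mk I)) •
        (⊤ : Submodule (R ⧸ I) B) ≠ ⊤)
    (hB2 : ∀ xs : List (R ⧸ I),
      (xs.length : WithBot (WithTop ℕ)) = ringKrullDim (R ⧸ I) →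
      (Ideal.span {x | x ∈ xs}).radical = (IsLocalRing.maximalIdeal R).map (Ideal.Quotient.mk I) →
      RingTheory.Sequence.IsRegular B xs) :
    letI : Module R B := Module.compHom B (Ideal.Quotient.mk I)
    ((IsLocalRing.maximalIdeal R) • (⊤ : Submodule R B) ≠ ⊤) ∧
    (∀ xs : List R, (xs.length : WithBot (WithTop ℕ)) = ringKrullDim R →
      (Ideal.span {x | x ∈ xs}).radical = IsLocalRing.maximalIdeal R →
      RingTheory.Sequence.IsRegular B xs) := by
  letI : Module R B := Module.compHom B (Ideal.Quotient.mk I)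
  haveI : IsScalarTower R (R ⧸ I) B :=
    IsScalarTower.of_algebraMap_smul fun r b => rfl
  -- `R ⧸ I` is nontrivial, hence `I ≤ m`.
  have hne : Nontrivial (R ⧸ I) := by
    by_contra h
    rw [not_nontrivial_iff_subsingleton] at h
    have h1 : ringKrullDim (R ⧸ I) = ⊥ := ringKrullDim_eq_bot_of_subsingleton
    have h2 : (0 : WithBot (WithTop ℕ)) ≤ ringKrullDim R := ringKrullDim_nonneg_of_nontrivial
    rw [h1] at hdim
    rw [← hdim] at h2
    exact absurd h2 (WithBot.not_coe_le_bot (0 : ℕ∞))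
  have hI : I ≤ IsLocalRing.maximalIdeal R := by
    apply IsLocalRing.le_maximalIdeal
    intro h
    rw [h] at hne
    exact not_subsingleton_iff_nontrivial.mpr hne
      (Ideal.Quotient.subsingleton_iff.mpr rfl)
  constructor
  · intro h
    apply hB1
    have := Ideal.smul_restrictScalars (S := R ⧸ I) (M := B)
      (IsLocalRing.maximalIdeal R) (⊤ : Submodule (R ⧸ I) B)
    rw [Submodule.restrictScalars_top, Ideal.Quotient.algebraMap_eq, h] at this
    rw [← Submodule.restrictScalars_eq_top_iff (S := R), this]
  · intro xs hlen hrad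
    have key : RingTheory.Sequence.IsRegular B (xs.map (Ideal.Quotient.mk I)) := by
      apply hB2
      · rw [List.length_map, hdim]
        exact hlen
      · have hset : {x | x ∈ xs.map (Ideal.Quotient.mk I)} =
            (Ideal.Quotient.mk I) '' {x | x ∈ xs} := by
          ext x; simp [List.mem_map]
        rw [hset, ← Ideal.map_span]
        set J : Ideal R := Ideal.span {x | x ∈ xs}
        have h1 : Ideal.map (Ideal.Quotient.mk I) J =
            Ideal.map (Ideal.Quotient.mk I) (J ⊔ I) := by
          rw [Ideal.map_sup]
          simp [Ideal.map_quotient_self]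
        have hker : RingHom.ker (Ideal.Quotient.mk I) ≤ J ⊔ I := by
          rw [Ideal.mk_ker]; exact le_sup_right
        have h2 : (J ⊔ I).radical = IsLocalRing.maximalIdeal R := by
          apply le_antisymm
          · have : J ⊔ I ≤ IsLocalRing.maximalIdeal R := by
              apply sup_le _ hI
              calc J ≤ J.radical := Ideal.le_radical
              _ = _ := hrad
            calc (J ⊔ I).radical ≤ (IsLocalRing.maximalIdeal R).radical :=
                Ideal.radical_mono this
              _ = _ := (IsLocalRing.maximalIdeal.isMaximal R).isPrime.radical
          · rw [← hrad]; exact Ideal.radical_mono le_sup_left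
        rw [h1, ← Ideal.map_radical_of_surjective Ideal.Quotient.mk_surjective hker, h2]
    have hforall : List.Forall₂
        (fun (r : R) (s : R ⧸ I) => ∀ x : B, (AddEquiv.refl B) (r • x) = s • (AddEquiv.refl B) x)
        xs (xs.map (Ideal.Quotient.mk I)) :=
      List.forall₂_map_right_iff.mpr <| List.forall₂_same.mpr fun r _ x => rfl
    exact ((AddEquiv.refl B).isRegular_congr hforall).mpr key
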